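/- Let μ₁,…,μ_d > 0, λ > 0, and n > 0. Define f(δ) = (1+δ)/n · Σᵢ μᵢ/(μᵢ + λ(1+δ)) for δ ≥ 0. Then f has a unique fixed point δ ≥ 0. -/

import Mathlib

/-- The fixed-point equation δ = (1+δ)/n · Σᵢ μᵢ/(μᵢ + λ(1+δ)) has a unique
nonnegative solution. -/
theorem stmt3 (d : ℕ) (hd : 0 < d) (μ : Fin d → ℝ) (hμ : ∀ i, 0 < μ i)
    (lam : ℝ) (hlam : 0 < lam) (n : ℝ) (hn : 0 < n) :
    ∃! δ : ℝ, 0 ≤ δ ∧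
      (1 + δ) / n * ∑ i, μ i / (μ i + lam * (1 + δ)) = δ := by
  have hne : (Finset.univ : Finset (Fin d)).Nonempty := by
    simpa [Finset.univ_nonempty_iff, Fin.pos_iff_nonempty] using hd
  set S : ℝ → ℝ := fun δ => ∑ i, μ i / (μ i + lam * (1 + δ)) with hS
  have hden : ∀ (i : Fin d) (δ : ℝ), 0 ≤ δ → 0 < μ i + lam * (1 + δ) := by
    intro i δ hδ; have := hμ i; nlinarith
  have hSpos : ∀ δ : ℝ, 0 ≤ δ → 0 < S δ := by
    intro δ hδ
    exact Finset.sum_pos (fun i _ => div_pos (hμ i) (hden i δ hδ)) hne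
  have hSmono : ∀ a b : ℝ, 0 ≤ a → a ≤ b → S b ≤ S a := by
    intro a b ha hab
    apply Finset.sum_le_sum
    intro i _
    have := hμ i
    gcongr
  -- key uniqueness lemma
  have key : ∀ a b : ℝ, 0 ≤ a → 0 ≤ b → a < b →
      (1 + a) / n * S a = a → (1 + b) / n * S b = b → False := by
    intro a b ha hb hab ea eb
    have h1a : (0:ℝ) < 1 + a := by linarith
    have h1b : (0:ℝ) < 1 + b := by linarith
    have e1 : (1 + a) * S a = a * n := by
      field_simp at ea; linarith
    have e2 : (1 + b) * S b = b * n := by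
      field_simp at eb; linarith
    nlinarith [mul_nonneg (mul_nonneg h1a.le h1b.le)
        (sub_nonneg.mpr (hSmono a b ha hab.le)),
      mul_pos hn (sub_pos.mpr hab), hSpos b hb]
  -- existence via IVT
  set C : ℝ := (∑ i, μ i) / (n * lam) with hC
  have hsum : 0 < ∑ i, μ i := Finset.sum_pos (fun i _ => hμ i) hne
  have hCpos : 0 < C := div_pos hsum (mul_pos hn hlam)
  set F : ℝ → ℝ := fun δ => (1 + δ) / n * S δ - δ with hF
  have hcont : ContinuousOn F (Set.Icc 0 C) := by
    apply ContinuousOn.sub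
    · apply ContinuousOn.mul
      · exact (continuousOn_const.add continuousOn_id).div_const n
      · apply continuousOn_finset_sum
        intro i _
        apply ContinuousOn.div continuousOn_const
        · exact continuousOn_const.add (continuousOn_const.mul
            (continuousOn_const.add continuousOn_id))
        · intro x hx; exact (hden i x hx.1).ne'
    · exact continuousOn_id
  have hF0 : 0 < F 0 := by
    have := hSpos 0 le_rfl
    simp only [hF]
    have : 0 < (1 + 0) / n * S 0 := by positivity
    linarith
  have hFC : F C ≤ 0 := by
    have h1C : (0:ℝ) < 1 + C := by linarith
    have hSC : S C ≤ (∑ i, μ i) / (lam * (1 + C)) := by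
      rw [Finset.sum_div]
      apply Finset.sum_le_sum
      intro i _
      gcongr <;> nlinarith [hμ i, hlam, h1C]
    have : (1 + C) / n * S C ≤ C := by
      calc (1 + C) / n * S C ≤ (1 + C) / n * ((∑ i, μ i) / (lam * (1 + C))) := by
            apply mul_le_mul_of_nonneg_left hSC
            apply div_nonneg (by linarith) hn.le
        _ = C := by rw [hC]; field_simp
    simp only [hF]
    linarith
  obtain ⟨δ, hmem, hFδ⟩ := intermediate_value_Icc' hCpos.le hcont ⟨hFC, hF0.le⟩
  have hδeq : (1 + δ) / n * S δ = δ := by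
    have : F δ = 0 := hFδ
    simp only [hF] at this
    linarith
  refine ⟨δ, ⟨hmem.1, hδeq⟩, ?_⟩
  intro b hb
  rcases lt_trichotomy b δ with h | h | h
  · exact absurd (key b δ hb.1 hmem.1 h hb.2 hδeq) (by simp)
  · exact h
  · exact absurd (key δ b hmem.1 hb.1 h hδeq hb.2) (by simp)
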